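/- Optimality of an improvement-stable policy (optimality part of Theorem 1): let π* be a policy that maximizes its own improvement objective at every state, i.e., for every state s and every policy π̃, J_{π*}(π*, s) ≥ J_{π*}(π̃, s). Then for every policy π and every state-action pair (s,a), q^d_{π*}(s,a) ≥ q^d_π(s,a). -/

import Mathlib

open Finset Filter Topology

def IsPolicy {S A : Type*} [Fintype A] (pi : S → A → ℝ) : Prop :=
  (∀ s a, 0 ≤ pi s a) ∧ (∀ s, ∑ a, pi s a = 1)

def IsKernel {S A : Type*} [Fintype S] (p : S → A → S → ℝ) : Prop :=
  (∀ s a s', 0 ≤ p s a s') ∧ (∀ s a, ∑ s', p s a s' = 1)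

noncomputable def klPen {S A : Type*} [Fintype A]
    (πb π : S → A → ℝ) (s : S) : ℝ :=
  ∑ a, π s a * Real.log (π s a / πb s a)

noncomputable def bellman {S A : Type*} [Fintype S] [Fintype A]
    (p : S → A → S → ℝ) (r : S → A → ℝ) (γ τ : ℝ) (πb π : S → A → ℝ)
    (q : S × A → ℝ) : S × A → ℝ :=
  fun sa => r sa.1 sa.2 + γ * ∑ s', p sa.1 sa.2 s' *
    ((∑ a', π s' a' * q (s', a')) - τ * klPen πb π s')

noncomputable def supNorm {X : Type*} [Fintype X] [Nonempty X] (f : X → ℝ) : ℝ :=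
  Finset.univ.sup' Finset.univ_nonempty (fun x => |f x|)

noncomputable def Jobj {S A : Type*} [Fintype A]
    (τ : ℝ) (πb : S → A → ℝ) (qd : S × A → ℝ) (πt : S → A → ℝ) (s : S) : ℝ :=
  (∑ a, πt s a * qd (s, a)) - τ * klPen πb πt s

theorem stmt13 {S A : Type*} [Fintype S] [Fintype A] [Nonempty S] [Nonempty A]
    (p : S → A → S → ℝ) (hp : IsKernel p)
    (r : S → A → ℝ) (γ τ : ℝ) (hγ0 : 0 ≤ γ) (hγ1 : γ < 1) (hτ : 0 ≤ τ)
    (πb : S → A → ℝ) (hπb : IsPolicy πb) (hπbpos : ∀ s a, 0 < πb s a)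
    (πs : S → A → ℝ) (hπs : IsPolicy πs)
    (qds : S × A → ℝ) (hqds : bellman p r γ τ πb πs qds = qds)
    (hmax : ∀ s : S, ∀ πt : S → A → ℝ, IsPolicy πt →
      Jobj τ πb qds πt s ≤ Jobj τ πb qds πs s) :
    ∀ π : S → A → ℝ, IsPolicy π →
      ∀ qd : S × A → ℝ, bellman p r γ τ πb π qd = qd →
        ∀ sa : S × A, qd sa ≤ qds sa := by
  intro π hπ qd hqd sa
  have hbel : ∀ sb : S × A, bellman p r γ τ πb π qds sb ≤ qds sb := by
    intro sb
    have h1 : ∀ s' : S, (∑ a', π s' a' * qds (s', a')) - τ * klPen πb π s'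
        ≤ (∑ a', πs s' a' * qds (s', a')) - τ * klPen πb πs s' :=
      fun s' => hmax s' π hπ
    calc bellman p r γ τ πb π qds sb
        ≤ bellman p r γ τ πb πs qds sb := by
          unfold bellman
          apply add_le_add_right
          apply mul_le_mul_of_nonneg_left _ hγ0
          apply Finset.sum_le_sum
          intro s' _
          exact mul_le_mul_of_nonneg_left (h1 s') (hp.1 _ _ _)
      _ = qds sb := by rw [hqds]
  set M := Finset.univ.sup' Finset.univ_nonempty (fun sb : S × A => qd sb - qds sb) with hM
  have hMle : ∀ sb : S × A, qd sb - qds sb ≤ M := fun sb =>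
    Finset.le_sup' (fun sb : S × A => qd sb - qds sb) (Finset.mem_univ sb)
  have key : ∀ sb : S × A, qd sb - qds sb ≤ γ * max M 0 := by
    intro sb
    have h2 : qd sb - qds sb ≤ bellman p r γ τ πb π qd sb - bellman p r γ τ πb π qds sb := by
      have := hbel sb
      have := congrFun hqd sb
      linarith
    have h3 : bellman p r γ τ πb π qd sb - bellman p r γ τ πb π qds sb
        = γ * ∑ s', p sb.1 sb.2 s' * ∑ a', π s' a' * (qd (s', a') - qds (s', a')) := by
      unfold bellman
      rw [add_sub_add_left_eq_sub, ← mul_sub, ← Finset.sum_sub_distrib]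
      congr 1
      apply Finset.sum_congr rfl
      intro s' _
      rw [← mul_sub]
      congr 1
      rw [sub_sub_sub_cancel_right, ← Finset.sum_sub_distrib]
      apply Finset.sum_congr rfl
      intro a' _
      ring
    have hinner : ∀ s', (∑ a', π s' a' * (qd (s', a') - qds (s', a'))) ≤ max M 0 := by
      intro s'
      calc (∑ a', π s' a' * (qd (s', a') - qds (s', a')))
          ≤ ∑ a', π s' a' * max M 0 := by
            apply Finset.sum_le_sum
            intro a' _
            exact mul_le_mul_of_nonneg_left (le_trans (hMle _) (le_max_left _ _)) (hπ.1 _ _)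
        _ = max M 0 := by rw [← Finset.sum_mul, hπ.2 s', one_mul]
    calc qd sb - qds sb
        ≤ γ * ∑ s', p sb.1 sb.2 s' * ∑ a', π s' a' * (qd (s', a') - qds (s', a')) :=
          h2.trans h3.le
      _ ≤ γ * ∑ s', p sb.1 sb.2 s' * max M 0 := by
          apply mul_le_mul_of_nonneg_left _ hγ0
          apply Finset.sum_le_sum
          intro s' _
          exact mul_le_mul_of_nonneg_left (hinner s') (hp.1 _ _ _)
      _ = γ * max M 0 := by rw [← Finset.sum_mul, hp.2 sb.1 sb.2, one_mul]
  have hMγ : M ≤ γ * max M 0 := Finset.sup'_le _ _ (fun sb _ => key sb)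
  have hM0 : M ≤ 0 := by
    by_contra h
    push_neg at h
    rw [max_eq_left h.le] at hMγ
    nlinarith
  linarith [hMle sa]
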